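/- For all real parameters a > 0, b > 1, T > 0, every even integer n ≥ 2, and every ε ∈ (0, 1], the interval [s_{n−1}(b,T) + T·b^{n−1}·arcsin(ε), s_n(b,T) − T·b^{n−1}·arcsin(ε)] is nonempty, and for every χ in this interval one has G_{a,b,T}(χ) ≤ −ε·a·T·b^{n−1}. -/

import Mathlib

open Real Filter Set

/-- Breakpoints `s_n(b,T) = T·π·(b^n − 1)/(b − 1)`. -/
noncomputable def brk (b T : ℝ) (n : ℕ) : ℝ := T * Real.pi * (b ^ n - 1) / (b - 1)

/-- Index of the segment containing `x ≥ 0`: the unique `m` with `s_m ≤ x < s_{m+1}`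
(for `b > 1`, `T > 0`). -/
noncomputable def seg (b T x : ℝ) : ℕ := sInf {n : ℕ | x < brk b T (n + 1)}

/-- The saturated Nussbaum function `N_{a,b,T}`: on `[s_{n−1}, s_n)` (with `m = n − 1`)
it equals `(−1)^m·a·cos((χ − s_m)/(b^m·T))`, extended evenly to `χ < 0`. -/
noncomputable def satN (a b T : ℝ) (χ : ℝ) : ℝ :=
  (-1 : ℝ) ^ (seg b T |χ|) * a *
    Real.cos ((|χ| - brk b T (seg b T |χ|)) / (b ^ (seg b T |χ|) * T))

/-- The integrated function `G_{a,b,T}(χ) = ∫_0^χ N_{a,b,T}(τ) dτ`. -/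
noncomputable def satG (a b T : ℝ) (χ : ℝ) : ℝ := ∫ τ in (0:ℝ)..χ, satN a b T τ

section Aux

variable {a b T : ℝ}

lemma brk_zero : brk b T 0 = 0 := by simp [brk]

lemma brk_strictMono (hb : 1 < b) (hT : 0 < T) : StrictMono (brk b T) := by
  intro i j hij
  have hb1 : (0:ℝ) < b - 1 := by linarith
  have hpow : b ^ i < b ^ j := pow_lt_pow_right₀ hb hij
  have hTπ : 0 < T * Real.pi := mul_pos hT Real.pi_pos
  unfold brk
  apply div_lt_div_of_pos_right _ hb1
  nlinarith

lemma brk_nonneg (hb : 1 < b) (hT : 0 < T) (m : ℕ) : 0 ≤ brk b T m := by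
  have := (brk_strictMono hb hT).monotone (Nat.zero_le m)
  simpa [brk_zero] using this

lemma brk_succ (hb : 1 < b) (m : ℕ) :
    brk b T (m + 1) = brk b T m + T * Real.pi * b ^ m := by
  have h : b - 1 ≠ 0 := by intro h; linarith [sub_eq_zero.mp h]
  unfold brk
  field_simp
  ring

lemma seg_eq (hb : 1 < b) (hT : 0 < T) {m : ℕ} {x : ℝ}
    (h1 : brk b T m ≤ x) (h2 : x < brk b T (m + 1)) : seg b T x = m := by
  have hmem : m ∈ {n : ℕ | x < brk b T (n + 1)} := h2
  refine le_antisymm (Nat.sInf_le hmem) (le_csInf ⟨m, hmem⟩ ?_)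
  intro k hk
  by_contra hlt
  push_neg at hlt
  have hle : brk b T (k + 1) ≤ brk b T m :=
    (brk_strictMono hb hT).monotone (by omega)
  exact absurd (lt_of_lt_of_le hk hle) (not_lt.mpr h1)

lemma satN_eq (hb : 1 < b) (hT : 0 < T) {m : ℕ} {x : ℝ}
    (h1 : brk b T m ≤ x) (h2 : x < brk b T (m + 1)) :
    satN a b T x = (-1 : ℝ) ^ m * a * Real.cos ((x - brk b T m) / (b ^ m * T)) := by
  have hx0 : 0 ≤ x := le_trans (brk_nonneg hb hT m) h1
  rw [satN, abs_of_nonneg hx0, seg_eq hb hT h1 h2]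

lemma integral_seg (hb : 1 < b) (hT : 0 < T) (m : ℕ) {χ : ℝ}
    (h1 : brk b T m ≤ χ) (h2 : χ ≤ brk b T (m + 1)) :
    ∫ τ in (brk b T m)..χ, satN a b T τ
      = (-1 : ℝ) ^ m * a * ((b ^ m * T) *
          Real.sin ((χ - brk b T m) / (b ^ m * T))) := by
  set s := brk b T m with hs
  have hc : (b ^ m * T) ≠ 0 := by positivity
  have hcong : ∀ᵐ τ ∂MeasureTheory.volume, τ ∈ Set.uIoc s χ →
      satN a b T τ = (-1 : ℝ) ^ m * a * Real.cos ((τ - s) / (b ^ m * T)) := by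
    have hne : ∀ᵐ τ : ℝ ∂MeasureTheory.volume, τ ≠ brk b T (m + 1) := by
      rw [MeasureTheory.ae_iff]
      have : {τ : ℝ | ¬τ ≠ brk b T (m + 1)} = {brk b T (m + 1)} := by
        ext τ; simp
      rw [this]
      exact MeasureTheory.measure_singleton _
    filter_upwards [hne] with τ hτne hτ
    have hτ' : τ ∈ Set.Ioc s χ := by rwa [Set.uIoc_of_le h1] at hτ
    have hτ1 : s ≤ τ := le_of_lt hτ'.1
    have hτ2 : τ < brk b T (m + 1) := lt_of_le_of_ne (le_trans hτ'.2 h2) hτne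
    exact satN_eq hb hT hτ1 hτ2
  rw [intervalIntegral.integral_congr_ae hcong]
  rw [intervalIntegral.integral_const_mul]
  have key : (∫ τ in s..χ, Real.cos ((τ - s) / (b ^ m * T)))
      = (b ^ m * T) * Real.sin ((χ - s) / (b ^ m * T)) := by
    have h3 : (∫ τ in s..χ, Real.cos ((τ - s) / (b ^ m * T)))
        = ∫ u in (0:ℝ)..(χ - s), Real.cos (u / (b ^ m * T)) := by
      have h4 := intervalIntegral.integral_comp_sub_right (a := s) (b := χ)
        (fun u : ℝ => Real.cos (u / (b ^ m * T))) s
      simpa using h4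
    rw [h3, intervalIntegral.integral_comp_div _ hc]
    simp [smul_eq_mul]
  rw [key]

lemma intervalIntegrable_seg (hb : 1 < b) (hT : 0 < T) (m : ℕ) {χ : ℝ}
    (h1 : brk b T m ≤ χ) (h2 : χ ≤ brk b T (m + 1)) :
    IntervalIntegrable (satN a b T) MeasureTheory.volume (brk b T m) χ := by
  set s := brk b T m with hs
  have hcont : Continuous fun τ : ℝ => (-1 : ℝ) ^ m * a * Real.cos ((τ - s) / (b ^ m * T)) := by
    fun_prop
  have hg : IntervalIntegrable (fun τ : ℝ => (-1 : ℝ) ^ m * a *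
      Real.cos ((τ - s) / (b ^ m * T))) MeasureTheory.volume s χ :=
    hcont.intervalIntegrable s χ
  refine hg.congr_ae ?_
  have hne : ∀ᵐ τ : ℝ ∂MeasureTheory.volume, τ ≠ brk b T (m + 1) := by
    rw [MeasureTheory.ae_iff]
    have : {τ : ℝ | ¬τ ≠ brk b T (m + 1)} = {brk b T (m + 1)} := by ext τ; simp
    rw [this]; exact MeasureTheory.measure_singleton _
  rw [Filter.EventuallyEq, MeasureTheory.ae_restrict_iff' measurableSet_uIoc]
  filter_upwards [hne] with τ hτne hτ
  have hτ' : τ ∈ Set.Ioc s χ := by rwa [Set.uIoc_of_le h1] at hτ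
  have hτ2 : τ < brk b T (m + 1) := lt_of_le_of_ne (le_trans hτ'.2 h2) hτne
  exact (satN_eq hb hT (le_of_lt hτ'.1) hτ2).symm

lemma intervalIntegrable_zero_brk (hb : 1 < b) (hT : 0 < T) (m : ℕ) :
    IntervalIntegrable (satN a b T) MeasureTheory.volume 0 (brk b T m) := by
  induction m with
  | zero => simp [brk_zero]
  | succ k ih =>
      exact ih.trans (intervalIntegrable_seg hb hT k
        ((brk_strictMono hb hT).monotone (Nat.le_succ k)) le_rfl)

lemma satG_brk (hb : 1 < b) (hT : 0 < T) (m : ℕ) : satG a b T (brk b T m) = 0 := by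
  induction m with
  | zero => simp [satG, brk_zero]
  | succ k ih =>
      have hle : brk b T k ≤ brk b T (k + 1) :=
        ((brk_strictMono hb hT).monotone (Nat.le_succ k))
      have hadd := intervalIntegral.integral_add_adjacent_intervals
        (intervalIntegrable_zero_brk (a := a) hb hT k)
        (intervalIntegrable_seg (a := a) hb hT k hle le_rfl)
      have hval := integral_seg (a := a) hb hT k (χ := brk b T (k + 1)) hle le_rfl
      have harg : (brk b T (k + 1) - brk b T k) / (b ^ k * T) = Real.pi := by
        rw [brk_succ hb k]
        field_simp
        ring
      rw [harg, Real.sin_pi] at hval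
      simp only [satG] at *
      rw [← hadd, ih, hval]
      ring

lemma sin_ge_of_mem (ε θ : ℝ) (hε0 : 0 < ε) (hε1 : ε ≤ 1)
    (hθ1 : Real.arcsin ε ≤ θ) (hθ2 : θ ≤ Real.pi - Real.arcsin ε) : ε ≤ Real.sin θ := by
  have harc : Real.arcsin ε ∈ Set.Icc (-(Real.pi / 2)) (Real.pi / 2) :=
    ⟨Real.neg_pi_div_two_le_arcsin ε, Real.arcsin_le_pi_div_two ε⟩
  have hεs : Real.sin (Real.arcsin ε) = ε := Real.sin_arcsin (by linarith) hε1
  rcases le_total θ (Real.pi / 2) with h | h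
  · have hθm : θ ∈ Set.Icc (-(Real.pi / 2)) (Real.pi / 2) :=
      ⟨le_trans harc.1 hθ1, h⟩
    calc ε = Real.sin (Real.arcsin ε) := hεs.symm
    _ ≤ Real.sin θ := Real.strictMonoOn_sin.monotoneOn harc hθm hθ1
  · have hθm : Real.pi - θ ∈ Set.Icc (-(Real.pi / 2)) (Real.pi / 2) :=
      ⟨by linarith [Real.pi_pos, harc.1, harc.2], by linarith [harc.1]⟩
    have : Real.sin (Real.arcsin ε) ≤ Real.sin (Real.pi - θ) :=
      Real.strictMonoOn_sin.monotoneOn harc hθm (by linarith)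
    rwa [Real.sin_pi_sub, hεs] at this

end Aux

/-- on even segments, away from the endpoints by `T·b^{n−1}·arcsin ε`,
`G` stays below `−ε·a·T·b^{n−1}`. -/
theorem satG_neg_interval (a b T : ℝ) (ha : 0 < a) (hb : 1 < b) (hT : 0 < T)
    (n : ℕ) (hn : 2 ≤ n) (hne : Even n) (ε : ℝ) (hε : ε ∈ Set.Ioc (0 : ℝ) 1) :
    brk b T (n - 1) + T * b ^ (n - 1) * Real.arcsin ε ≤
      brk b T n - T * b ^ (n - 1) * Real.arcsin ε ∧
    ∀ χ ∈ Set.Icc (brk b T (n - 1) + T * b ^ (n - 1) * Real.arcsin ε)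
        (brk b T n - T * b ^ (n - 1) * Real.arcsin ε),
      satG a b T χ ≤ -(ε * a * T * b ^ (n - 1)) := by
  obtain ⟨m, rfl⟩ : ∃ m, n = m + 1 := ⟨n - 1, by omega⟩
  have hmodd : Odd m := by
    rcases Nat.even_or_odd m with h | h
    · exact absurd hne (by simp [Nat.even_add_one, h])
    · exact h
  simp only [Nat.add_sub_cancel]
  have hc : (0:ℝ) < b ^ m * T := by positivity
  have harc0 : 0 < Real.arcsin ε := Real.arcsin_pos.mpr hε.1
  have harc2 : Real.arcsin ε ≤ Real.pi / 2 := Real.arcsin_le_pi_div_two ε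
  have hsucc : brk b T (m + 1) = brk b T m + T * Real.pi * b ^ m := brk_succ hb m
  constructor
  · rw [hsucc]
    nlinarith [pow_pos (lt_trans one_pos hb) m, Real.pi_pos]
  · intro χ hχ
    obtain ⟨hχ1, hχ2⟩ := hχ
    have h1 : brk b T m ≤ χ := by nlinarith [pow_pos (lt_trans one_pos hb) m]
    have h2 : χ ≤ brk b T (m + 1) := by
      rw [hsucc]; nlinarith [pow_pos (lt_trans one_pos hb) m]
    have hadd := intervalIntegral.integral_add_adjacent_intervals
      (intervalIntegrable_zero_brk (a := a) hb hT m)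
      (intervalIntegrable_seg (a := a) hb hT m h1 h2)
    have hG0 : satG a b T (brk b T m) = 0 := satG_brk hb hT m
    have hval := integral_seg (a := a) hb hT m h1 h2
    have hGχ : satG a b T χ = (-1 : ℝ) ^ m * a *
        ((b ^ m * T) * Real.sin ((χ - brk b T m) / (b ^ m * T))) := by
      simp only [satG] at *
      rw [← hadd, hG0, hval, zero_add]
    set θ := (χ - brk b T m) / (b ^ m * T) with hθdef
    have hθ1 : Real.arcsin ε ≤ θ := by
      rw [hθdef, le_div_iff₀ hc]
      nlinarith
    have hθ2 : θ ≤ Real.pi - Real.arcsin ε := by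
      rw [hθdef, div_le_iff₀ hc]
      rw [hsucc] at h2 hχ2
      nlinarith
    have hsin : ε ≤ Real.sin θ := sin_ge_of_mem ε θ hε.1 hε.2 hθ1 hθ2
    rw [hGχ, hmodd.neg_one_pow]
    nlinarith [mul_le_mul_of_nonneg_left hsin (mul_pos ha hc).le]
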